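/- Let A be an essential Marot ring and B an overring of A such that the contraction map Spec(B) → Spec(A) is surjective. Then A = B. -/

import Mathlib

/-- A Marot ring: regular ideals are generated by their regular elements. -/
def IsMarot (A : Type*) [CommRing A] : Prop :=
  ∀ I : Ideal A, (∃ r ∈ I, r ∈ nonZeroDivisors A) →
    I = Ideal.span {r : A | r ∈ I ∧ r ∈ nonZeroDivisors A}

/-- The underlying set of the regular quotient ring. -/
def rqSet {R K : Type*} [CommRing R] [CommRing K] (f : R →+* K) (P : Ideal R) : Set K :=
  {x | ∃ a s : R, s ∈ nonZeroDivisors R ∧ s ∉ P ∧ x * f s = f a}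

/-- The regular quotient ring at a prime, as a subring of K. -/
def rqSub {R K : Type*} [CommRing R] [CommRing K] (f : R →+* K) (P : Ideal R)
    (hP : P.IsPrime) : Subring K where
  carrier := rqSet f P
  one_mem' := ⟨1, 1, Submonoid.one_mem _, fun h => hP.ne_top (P.eq_top_iff_one.mpr h), by simp⟩
  zero_mem' := ⟨0, 1, Submonoid.one_mem _, fun h => hP.ne_top (P.eq_top_iff_one.mpr h), by simp⟩
  mul_mem' := by
    rintro x y ⟨a, s, hs, hsP, hx⟩ ⟨b, t, ht, htP, hy⟩
    refine ⟨a * b, s * t, mul_mem hs ht, fun h => ((hP.mem_or_mem h).elim hsP htP), ?_⟩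
    rw [map_mul, map_mul]
    calc x * y * (f s * f t) = (x * f s) * (y * f t) := by ring
    _ = f a * f b := by rw [hx, hy]
  add_mem' := by
    rintro x y ⟨a, s, hs, hsP, hx⟩ ⟨b, t, ht, htP, hy⟩
    refine ⟨a * t + b * s, s * t, mul_mem hs ht, fun h => ((hP.mem_or_mem h).elim hsP htP), ?_⟩
    rw [map_mul, map_add, map_mul, map_mul]
    calc (x + y) * (f s * f t) = (x * f s) * f t + (y * f t) * f s := by ring
    _ = f a * f t + f b * f s := by rw [hx, hy]
  neg_mem' := by
    rintro x ⟨a, s, hs, hsP, hx⟩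
    exact ⟨-a, s, hs, hsP, by rw [map_neg, neg_mul, hx]⟩

/-- The canonical map into the regular quotient ring. -/
def toRq {R K : Type*} [CommRing R] [CommRing K] (f : R →+* K) (P : Ideal R)
    (hP : P.IsPrime) : R →+* rqSub f P hP :=
  f.codRestrict _ fun r =>
    ⟨r, 1, Submonoid.one_mem _, fun h => hP.ne_top (P.eq_top_iff_one.mpr h), by simp⟩

/-- A Manis valuation pair of K. -/
def IsManisPair {K : Type*} [CommRing K] (V : Subring K) (M : Ideal V) : Prop :=
  M.IsPrime ∧ ∀ x : K, x ∉ V → ∃ y ∈ M, ∃ z : V, (z : K) = x * (y : K) ∧ z ∉ M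

/-- The weakly Bourbaki associated primes of K/A. -/
def WBAssoc (A : Type*) [CommRing A] : Set (Ideal A) :=
  {P | ∃ a b : A, b ∈ nonZeroDivisors A ∧
    P ∈ ((Ideal.span {b}).colon (Ideal.span {a})).minimalPrimes}

/-- A regular prime P is valued if (A_(P), P·A_(P)) is a Manis valuation pair. -/
def IsValuedPrime (A : Type*) [CommRing A] (P : Ideal A) : Prop :=
  ∃ hP : P.IsPrime,
    IsManisPair (rqSub (algebraMap A (Localization (nonZeroDivisors A))) P hP)
      (P.map (toRq (algebraMap A (Localization (nonZeroDivisors A))) P hP))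

/-- An essential ring: an intersection of regular quotient rings at valued primes. -/
def Essential (A : Type*) [CommRing A] : Prop :=
  ∃ G : Set (Ideal A), (∀ P ∈ G, IsValuedPrime A P) ∧
    ∀ x : Localization (nonZeroDivisors A),
      x ∈ (algebraMap A (Localization (nonZeroDivisors A))).range ↔
        ∀ P ∈ G, x ∈ rqSet (algebraMap A (Localization (nonZeroDivisors A))) P

section AuxLemmas

variable {A : Type*} [CommRing A]

/-- Clearing denominators: every element of P·A_(P) can be written as f p / f s with
p ∈ P and s regular not in P. -/
lemma rq_clear_denom {P : Ideal A} (hP : P.IsPrime)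
    {y : rqSub (algebraMap A (Localization (nonZeroDivisors A))) P hP}
    (hy : y ∈ P.map (toRq (algebraMap A (Localization (nonZeroDivisors A))) P hP)) :
    ∃ s p : A, s ∈ nonZeroDivisors A ∧ s ∉ P ∧ p ∈ P ∧
      (y : Localization (nonZeroDivisors A)) *
        algebraMap A (Localization (nonZeroDivisors A)) s
        = algebraMap A (Localization (nonZeroDivisors A)) p := by
  have hone : (1 : A) ∉ P := fun h => hP.ne_top (P.eq_top_iff_one.mpr h)
  rw [Ideal.map] at hy
  refine Submodule.span_induction ?_ ?_ ?_ ?_ hy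
  · rintro w ⟨p, hp, rfl⟩
    exact ⟨1, p, one_mem _, hone, hp, by simp [toRq, RingHom.codRestrict]; rfl⟩
  · exact ⟨1, 0, one_mem _, hone, P.zero_mem, by simp⟩
  · rintro a b _ _ ⟨s, p, hs, hsP, hp, hab⟩ ⟨t, q, ht, htP, hq, hab'⟩
    refine ⟨s * t, p * t + q * s, mul_mem hs ht,
      fun h => (hP.mem_or_mem h).elim hsP htP,
      P.add_mem (P.mul_mem_right _ hp) (P.mul_mem_right _ hq), ?_⟩
    have hco : ((a + b : ↥(rqSub (algebraMap A (Localization (nonZeroDivisors A))) P hP)) :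
        Localization (nonZeroDivisors A)) = (a : Localization (nonZeroDivisors A))
          + (b : Localization (nonZeroDivisors A)) := rfl
    rw [hco, map_mul, map_add, map_mul, map_mul]
    linear_combination ((algebraMap A (Localization (nonZeroDivisors A))) t) * hab
      + ((algebraMap A (Localization (nonZeroDivisors A))) s) * hab'
  · rintro v b _ ⟨s, p, hs, hsP, hp, hb⟩
    obtain ⟨a', s', hs', hs'P, hv⟩ : (v : Localization (nonZeroDivisors A)) ∈
        rqSet (algebraMap A (Localization (nonZeroDivisors A))) P := v.2
    refine ⟨s' * s, a' * p, mul_mem hs' hs,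
      fun h => (hP.mem_or_mem h).elim hs'P hsP, P.mul_mem_left _ hp, ?_⟩
    simp only [smul_eq_mul, MulMemClass.coe_mul]
    rw [map_mul, map_mul]
    linear_combination ((v : Localization (nonZeroDivisors A))
        * (algebraMap A (Localization (nonZeroDivisors A))) s') * hb
      + ((algebraMap A (Localization (nonZeroDivisors A))) p) * hv

end AuxLemmas

theorem statement13 (A : Type*) [CommRing A] (hM : IsMarot A) (hE : Essential A)
    (B : Subalgebra A (Localization (nonZeroDivisors A)))
    (hsurj : Function.Surjective (PrimeSpectrum.comap (algebraMap A B))) :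
    B = ⊥ := by
  classical
  obtain ⟨G, hG, hInt⟩ := hE
  refine le_antisymm (fun x hx => ?_) bot_le
  rw [Algebra.mem_bot]
  have hr : x ∈ (algebraMap A (Localization (nonZeroDivisors A))).range := by
    rw [hInt]
    intro P hPG
    obtain ⟨hP, hMp, hManis⟩ := hG P hPG
    by_contra hxV
    set f := algebraMap A (Localization (nonZeroDivisors A)) with hf
    -- a prime of B lying over P
    obtain ⟨Q, hQ⟩ := hsurj ⟨P, hP⟩
    have hQP : Q.asIdeal.comap (algebraMap A B) = P := by
      have := congrArg PrimeSpectrum.asIdeal hQ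
      rwa [PrimeSpectrum.comap_asIdeal] at this
    -- the Manis property
    obtain ⟨y, hyM, z, hzx, hzM⟩ := hManis x hxV
    obtain ⟨c, t, ht, htP, hzc⟩ :
        (z : Localization (nonZeroDivisors A)) ∈ rqSet f P := z.2
    obtain ⟨s, p, hs, hsP, hp, hys⟩ := rq_clear_denom hP hyM
    have finj : Function.Injective f :=
      IsLocalization.injective (Localization (nonZeroDivisors A))
        (le_refl (nonZeroDivisors A))
    -- c ∉ P, since z ∉ M
    have hcP : c ∉ P := by
      intro hc
      apply hzM
      have htM : toRq f P hP t ∉ P.map (toRq f P hP) := by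
        intro hmem
        obtain ⟨s2, p2, hs2, hs2P, hp2, h2⟩ := rq_clear_denom hP hmem
        have hco : f (t * s2) = f p2 := by
          rw [map_mul]; exact h2
        have : t * s2 ∈ P := finj hco ▸ hp2
        exact (hP.mem_or_mem this).elim htP hs2P
      have hmul : z * toRq f P hP t = toRq f P hP c := Subtype.ext hzc
      have hzt : z * toRq f P hP t ∈ P.map (toRq f P hP) := by
        rw [hmul]; exact Ideal.mem_map_of_mem _ hc
      exact (hMp.mem_or_mem hzt).resolve_right htM
    -- key computation in K
    have key : x * f (p * t) = f (c * s) := by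
      rw [map_mul, map_mul]
      linear_combination (-(x * f t)) * hys + (f s) * hzc + (-(f s * f t)) * hzx
    -- transfer to B
    have hxB : ((⟨x, hx⟩ : B) * algebraMap A B (p * t)) = algebraMap A B (c * s) := by
      apply Subtype.ext
      simpa using key
    have hmem : algebraMap A B (p * t) ∈ Q.asIdeal := by
      have : p * t ∈ P := P.mul_mem_right t hp
      rw [← hQP] at this
      exact this
    have hcs : c * s ∈ P := by
      rw [← hQP]
      show algebraMap A B (c * s) ∈ Q.asIdeal
      rw [← hxB]
      exact Q.asIdeal.mul_mem_left _ hmem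
    exact (hP.mem_or_mem hcs).elim hcP hsP
  exact hr
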